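/- Let G and G′ be finite directed graphs on the same vertex set V with nonnegative edge weights, and let S ⊆ V be a set of initially blue vertices. Suppose G′ is obtained from G by increasing the weights of some directed edges (u,w) with u ∈ S (all edges whose weights change have their tail in S, the changed weights satisfy W_{G′}(u,w) ≥ W_G(u,w), and all other edge weights are unchanged). Then ept_rzf(G,S) ≥ ept_rzf(G′,S). -/

import Mathlib

open scoped ENNReal NNReal

namespace RZF

variable {V : Type*} [Fintype V] [DecidableEq V]

/-- Probability that the white vertex `x` turns blue in one round of weighted
randomized zero forcing with weights `w`, given the current blue set `B`
(`0` when the total incoming weight of `x` is `0`). -/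
noncomputable def turnProb (w : V → V → ℝ≥0) (B : Finset V) (x : V) : ℝ≥0 :=
  (∑ u ∈ B, w u x) / ∑ u, w u x

/-- One-round transition probability of the RZF Markov chain from blue set `B`
to blue set `C`: each white vertex independently turns blue with probability
`turnProb w B ·`, and blue vertices stay blue. -/
noncomputable def stepProb (w : V → V → ℝ≥0) (B C : Finset V) : ℝ≥0∞ :=
  if B ⊆ C then
    (∏ x ∈ C \ B, (turnProb w B x : ℝ≥0∞)) *
      ∏ x ∈ Cᶜ, (1 - (turnProb w B x : ℝ≥0∞))
  else 0

/-- Distribution of the blue set after `t` rounds, started from `S`. -/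
noncomputable def state (w : V → V → ℝ≥0) (S : Finset V) : ℕ → Finset V → ℝ≥0∞
  | 0 => fun C => if C = S then 1 else 0
  | t + 1 => fun C => ∑ B : Finset V, state w S t B * stepProb w B C

/-- Expected propagation time `∑ₜ P(Bₜ ≠ V(G))`; this equals `E[τ]` when the
all-blue state is reachable from `S`, and `∞` otherwise. -/
noncomputable def ept (w : V → V → ℝ≥0) (S : Finset V) : ℝ≥0∞ :=
  ∑' t : ℕ, ∑ C ∈ Finset.univ.filter (fun C : Finset V => C ≠ Finset.univ),
    state w S t C

/-- Minimum expected propagation time over singleton starting sets. -/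
noncomputable def eptMin (w : V → V → ℝ≥0) : ℝ≥0∞ :=
  ⨅ v : V, ept w {v}

/-- The weight function of an unweighted directed graph: weight `1` on each
edge and `0` otherwise, so that `turnProb` is the fraction of in-neighbors
that are blue. -/
def unweight (adj : V → V → Prop) [DecidableRel adj] : V → V → ℝ≥0 :=
  fun u v => if adj u v then 1 else 0

end RZF

/-- `reachIn adj t a b` : there is a directed path of length at most `t`
from `a` to `b` in the directed graph with adjacency relation `adj`. -/
def reachIn {V : Type*} (adj : V → V → Prop) : ℕ → V → V → Prop
  | 0, a, b => a = b
  | t + 1, a, b => reachIn adj t a b ∨ ∃ c, reachIn adj t a c ∧ adj c b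

namespace RZFAux

open RZF Finset

set_option linter.unusedSectionVars false

variable {V : Type*} [Fintype V] [DecidableEq V]

lemma turnProb_le_one (w : V → V → ℝ≥0) (B : Finset V) (x : V) :
    turnProb w B x ≤ 1 := by
  unfold turnProb
  rcases eq_or_ne (∑ u, w u x) 0 with h | h
  · simp [h]
  · rw [div_le_one (pos_iff_ne_zero.mpr h)]
    exact Finset.sum_le_sum_of_subset (Finset.subset_univ B)

lemma turnProb_mono_B (w : V → V → ℝ≥0) {B B' : Finset V} (h : B ⊆ B') (x : V) :
    turnProb w B x ≤ turnProb w B' x := by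
  unfold turnProb
  rw [div_eq_mul_inv, div_eq_mul_inv]
  exact mul_le_mul_left (Finset.sum_le_sum_of_subset h) _

lemma turnProb_le_of_weights (w w' : V → V → ℝ≥0) (S : Finset V)
    (hout : ∀ u x : V, u ∉ S → w' u x = w u x)
    (hin : ∀ u x : V, u ∈ S → w u x ≤ w' u x)
    {B : Finset V} (hSB : S ⊆ B) (x : V) :
    turnProb w B x ≤ turnProb w' B x := by
  have hw : ∀ u, w u x ≤ w' u x := by
    intro u
    by_cases hu : u ∈ S
    · exact hin u x hu
    · exact (hout u x hu).ge
  set a := ∑ u ∈ B, w u x with ha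
  set b := ∑ u, w u x with hb
  set D := ∑ u ∈ B, (w' u x - w u x) with hD
  have hab : a ≤ b := Finset.sum_le_sum_of_subset (Finset.subset_univ B)
  have hnum : ∑ u ∈ B, w' u x = a + D := by
    rw [ha, hD, ← Finset.sum_add_distrib]
    exact Finset.sum_congr rfl fun u _ => (add_tsub_cancel_of_le (hw u)).symm
  have hden : ∑ u, w' u x = b + D := by
    have h1 : ∑ u, (w' u x - w u x) = D := by
      rw [hD]
      refine (Finset.sum_subset (Finset.subset_univ B) ?_).symm
      intro u _ hu
      have : u ∉ S := fun hs => hu (hSB hs)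
      simp [hout u x this]
    rw [hb, ← h1, ← Finset.sum_add_distrib]
    exact Finset.sum_congr rfl fun u _ => (add_tsub_cancel_of_le (hw u)).symm
  unfold turnProb
  rw [hnum, hden, ← ha, ← hb]
  rcases eq_or_ne b 0 with hb0 | hb0
  · have : a = 0 := le_antisymm (hb0 ▸ hab) zero_le
    simp [this]
  · have hbD : b + D ≠ 0 := fun h => hb0 (by
      have := add_eq_zero.mp h; exact this.1)
    rw [div_le_div_iff₀ (pos_iff_ne_zero.mpr hb0) (pos_iff_ne_zero.mpr hbD)]
    rw [mul_add, add_mul]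
    refine add_le_add ?_ ?_
    · rw [mul_comm]
    · calc a * D ≤ b * D := mul_le_mul_left hab _
        _ = D * b := mul_comm _ _


/-- Expectation of `f` under the product-Bernoulli measure with parameters `p`
on the ground set `A`. -/
noncomputable def bern (A : Finset V) (p : V → ℝ≥0∞) (f : Finset V → ℝ≥0∞) : ℝ≥0∞ :=
  ∑ T ∈ A.powerset, (∏ x ∈ T, p x) * (∏ x ∈ A \ T, (1 - p x)) * f T

lemma bern_empty (p : V → ℝ≥0∞) (f : Finset V → ℝ≥0∞) : bern ∅ p f = f ∅ := by
  simp [bern]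

lemma bern_insert {a : V} {A : Finset V} (ha : a ∉ A) (p : V → ℝ≥0∞)
    (f : Finset V → ℝ≥0∞) :
    bern (insert a A) p f
      = p a * bern A p (fun T => f (insert a T)) + (1 - p a) * bern A p f := by
  unfold bern
  rw [Finset.powerset_insert, Finset.sum_union, Finset.sum_image, Finset.mul_sum,
    Finset.mul_sum]
  · rw [add_comm]
    congr 1
    · refine Finset.sum_congr rfl fun T hT => ?_
      rw [Finset.mem_powerset] at hT
      have haT : a ∉ T := fun h => ha (hT h)
      have h1 : insert a A \ insert a T = A \ T := by
        ext x; simp only [Finset.mem_sdiff, Finset.mem_insert]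
        constructor
        · rintro ⟨h | h, h2⟩
          · exact absurd (Or.inl h) h2
          · exact ⟨h, fun hx => h2 (Or.inr hx)⟩
        · rintro ⟨h1, h2⟩
          refine ⟨Or.inr h1, ?_⟩
          rintro (rfl | hx)
          · exact ha h1
          · exact h2 hx
      rw [h1, Finset.prod_insert haT]
      ring
    · refine Finset.sum_congr rfl fun T hT => ?_
      rw [Finset.mem_powerset] at hT
      have haT : a ∉ T := fun h => ha (hT h)
      have h1 : insert a A \ T = insert a (A \ T) := by
        ext x; simp only [Finset.mem_sdiff, Finset.mem_insert]
        constructor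
        · rintro ⟨h | h, h2⟩
          · exact Or.inl h
          · exact Or.inr ⟨h, h2⟩
        · rintro (rfl | ⟨h1, h2⟩)
          · exact ⟨Or.inl rfl, haT⟩
          · exact ⟨Or.inr h1, h2⟩
      have h2 : a ∉ A \ T := fun h => ha (Finset.mem_sdiff.mp h).1
      rw [h1, Finset.prod_insert h2]
      ring
  · intro T hT T' hT' h
    rw [Finset.mem_coe, Finset.mem_powerset] at hT hT'
    have haT : a ∉ T := fun hx => ha (hT hx)
    have haT' : a ∉ T' := fun hx => ha (hT' hx)
    have := congrArg (Finset.erase · a) h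
    simpa [Finset.erase_insert haT, Finset.erase_insert haT'] using this
  · rw [Finset.disjoint_left]
    intro T hT hT2
    rw [Finset.mem_powerset] at hT
    obtain ⟨T', hT', rfl⟩ := Finset.mem_image.mp hT2
    exact ha (hT (Finset.mem_insert_self a T'))

lemma bern_mono_f (A : Finset V) (p : V → ℝ≥0∞) {f g : Finset V → ℝ≥0∞}
    (h : ∀ T, f T ≤ g T) : bern A p f ≤ bern A p g :=
  Finset.sum_le_sum fun T _ => mul_le_mul_right (h T) _

lemma key_arith (a b p q : ℝ≥0∞) (hab : b ≤ a) (hpq : p ≤ q) (hq : q ≤ 1) :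
    p * a + (1 - p) * b ≤ q * a + (1 - q) * b := by
  have h1 : (1 : ℝ≥0∞) - p = (1 - q) + (q - p) := (tsub_add_tsub_cancel hq hpq).symm
  calc p * a + (1 - p) * b = p * a + (1 - q) * b + (q - p) * b := by
        rw [h1, add_mul]; ring
    _ ≤ p * a + (1 - q) * b + (q - p) * a := by gcongr
    _ = (p + (q - p)) * a + (1 - q) * b := by ring
    _ = q * a + (1 - q) * b := by rw [add_tsub_cancel_of_le hpq]

lemma bern_mono_p (A : Finset V) {p q : V → ℝ≥0∞}
    (hpq : ∀ x, p x ≤ q x) (hq : ∀ x, q x ≤ 1)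
    {f : Finset V → ℝ≥0∞} (hf : Monotone f) :
    bern A p f ≤ bern A q f := by
  induction A using Finset.induction generalizing f with
  | empty => simp [bern_empty]
  | @insert a A ha ih =>
    rw [bern_insert ha, bern_insert ha]
    have hf1 : Monotone fun T => f (insert a T) :=
      fun T T' h => hf (Finset.insert_subset_insert a h)
    calc p a * bern A p (fun T => f (insert a T)) + (1 - p a) * bern A p f
        ≤ p a * bern A q (fun T => f (insert a T)) + (1 - p a) * bern A q f := by
          gcongr
          · exact ih hf1
          · exact ih hf
      _ ≤ q a * bern A q (fun T => f (insert a T)) + (1 - q a) * bern A q f := by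
          refine key_arith _ _ _ _ ?_ (hpq a) (hq a)
          exact bern_mono_f A q fun T => hf (Finset.subset_insert a T)

lemma bern_one (A : Finset V) {p : V → ℝ≥0∞} (hp : ∀ x, p x ≤ 1) :
    bern A p (fun _ => 1) = 1 := by
  induction A using Finset.induction with
  | empty => simp [bern_empty]
  | @insert a A ha ih =>
    rw [bern_insert ha]
    simp only [ih]
    rw [mul_one, mul_one, add_tsub_cancel_of_le (hp a)]


/-- The per-vertex one-round blue probabilities, with blue vertices forced. -/
noncomputable def phat (w : V → V → ℝ≥0) (B : Finset V) (x : V) : ℝ≥0∞ :=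
  if x ∈ B then 1 else (turnProb w B x : ℝ≥0∞)

lemma phat_le_one (w : V → V → ℝ≥0) (B : Finset V) (x : V) : phat w B x ≤ 1 := by
  unfold phat
  split
  · exact le_rfl
  · exact_mod_cast turnProb_le_one w B x

lemma step_exp_eq (w : V → V → ℝ≥0) (B : Finset V) (f : Finset V → ℝ≥0∞) :
    ∑ C : Finset V, stepProb w B C * f C = bern Finset.univ (phat w B) f := by
  unfold bern
  rw [Finset.powerset_univ]
  refine Finset.sum_congr rfl fun C _ => ?_
  by_cases hBC : B ⊆ C
  · rw [stepProb, if_pos hBC]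
    have h1 : ∏ x ∈ C, phat w B x = ∏ x ∈ C \ B, (turnProb w B x : ℝ≥0∞) := by
      rw [← Finset.prod_subset (Finset.sdiff_subset : C \ B ⊆ C) (fun x hx hx2 => ?_)]
      · refine Finset.prod_congr rfl fun x hx => ?_
        rw [phat, if_neg (Finset.mem_sdiff.mp hx).2]
      · rw [phat, if_pos]
        by_contra hxB
        exact hx2 (Finset.mem_sdiff.mpr ⟨hx, hxB⟩)
    have h2 : ∏ x ∈ Finset.univ \ C, (1 - phat w B x)
        = ∏ x ∈ Cᶜ, (1 - (turnProb w B x : ℝ≥0∞)) := by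
      rw [← Finset.compl_eq_univ_sdiff]
      refine Finset.prod_congr rfl fun x hx => ?_
      have hxC : x ∉ C := Finset.mem_compl.mp hx
      rw [phat, if_neg (fun hxB => hxC (hBC hxB))]
    rw [h1, h2]
  · rw [stepProb, if_neg hBC, zero_mul]
    obtain ⟨u, huB, huC⟩ := Finset.not_subset.mp hBC
    have hu : u ∈ Finset.univ \ C := Finset.mem_sdiff.mpr ⟨Finset.mem_univ u, huC⟩
    have : (1 : ℝ≥0∞) - phat w B u = 0 := by rw [phat, if_pos huB, tsub_self]
    rw [Finset.prod_eq_zero hu this, mul_zero, zero_mul]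

lemma step_exp_le (w w' : V → V → ℝ≥0) {B B' : Finset V} (hBB : B ⊆ B')
    (hp : ∀ x, x ∉ B' → turnProb w B x ≤ turnProb w' B' x)
    {f : Finset V → ℝ≥0∞} (hf : Monotone f) :
    ∑ C : Finset V, stepProb w B C * f C ≤ ∑ C : Finset V, stepProb w' B' C * f C := by
  rw [step_exp_eq, step_exp_eq]
  refine bern_mono_p _ (fun x => ?_) (phat_le_one w' B') hf
  unfold phat
  by_cases hx : x ∈ B'
  · rw [if_pos hx]
    split
    · exact le_rfl
    · exact_mod_cast turnProb_le_one w B x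
  · rw [if_neg hx, if_neg (fun h => hx (hBB h))]
    exact_mod_cast hp x hx

lemma step_sum_one (w : V → V → ℝ≥0) (B : Finset V) :
    ∑ C : Finset V, stepProb w B C = 1 := by
  have := step_exp_eq w B (fun _ => 1)
  simpa [bern_one Finset.univ (phat_le_one w B)] using this

lemma state_sum_one (w : V → V → ℝ≥0) (S : Finset V) (t : ℕ) :
    ∑ C : Finset V, state w S t C = 1 := by
  induction t with
  | zero => simp [state]
  | succ t ih =>
    simp only [state]
    rw [Finset.sum_comm]
    calc ∑ B : Finset V, ∑ C : Finset V, state w S t B * stepProb w B C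
        = ∑ B : Finset V, state w S t B * ∑ C : Finset V, stepProb w B C := by
          simp [Finset.mul_sum]
      _ = 1 := by simp [step_sum_one, ih]

lemma state_support (w : V → V → ℝ≥0) (S : Finset V) (t : ℕ) {B : Finset V}
    (h : ¬ S ⊆ B) : state w S t B = 0 := by
  induction t generalizing B with
  | zero =>
    simp only [state]
    rw [if_neg]
    rintro rfl
    exact h le_rfl
  | succ t ih =>
    simp only [state]
    refine Finset.sum_eq_zero fun B' _ => ?_
    by_cases hSB' : S ⊆ B'
    · rw [stepProb, if_neg, mul_zero]
      exact fun hB'B => h (hSB'.trans hB'B)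
    · rw [ih hSB', zero_mul]

/-- Main stochastic domination. -/
lemma state_dom (w w' : V → V → ℝ≥0) (S : Finset V)
    (hout : ∀ u x : V, u ∉ S → w' u x = w u x)
    (hin : ∀ u x : V, u ∈ S → w u x ≤ w' u x) (t : ℕ)
    {f : Finset V → ℝ≥0∞} (hf : Monotone f) :
    ∑ C : Finset V, state w S t C * f C ≤ ∑ C : Finset V, state w' S t C * f C := by
  induction t generalizing f with
  | zero => simp [state]
  | succ t ih =>
    have hg : Monotone fun B => ∑ C : Finset V, stepProb w' B C * f C := by
      intro B B' hBB
      exact step_exp_le w' w' hBB (fun x _ => turnProb_mono_B w' hBB x) hf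
    have rearrange : ∀ v : V → V → ℝ≥0,
        ∑ C : Finset V, state v S (t+1) C * f C
          = ∑ B : Finset V, state v S t B * ∑ C : Finset V, stepProb v B C * f C := by
      intro v
      simp only [state]
      simp only [Finset.sum_mul, Finset.mul_sum, mul_assoc]
      rw [Finset.sum_comm]
    rw [rearrange w, rearrange w']
    calc ∑ B : Finset V, state w S t B * ∑ C : Finset V, stepProb w B C * f C
        ≤ ∑ B : Finset V, state w S t B * ∑ C : Finset V, stepProb w' B C * f C := by
          refine Finset.sum_le_sum fun B _ => ?_
          by_cases hSB : S ⊆ B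
          · refine mul_le_mul_right ?_ _
            exact step_exp_le w w' le_rfl
              (fun x _ => turnProb_le_of_weights w w' S hout hin hSB x) hf
          · rw [state_support w S t hSB, zero_mul, zero_mul]
      _ ≤ ∑ B : Finset V, state w' S t B * ∑ C : Finset V, stepProb w' B C * f C :=
          ih hg



lemma ept_mono (w w' : V → V → ℝ≥0) (S : Finset V)
    (hout : ∀ u x : V, u ∉ S → w' u x = w u x)
    (hin : ∀ u x : V, u ∈ S → w u x ≤ w' u x) :
    ept w' S ≤ ept w S := by
  unfold ept
  refine ENNReal.tsum_le_tsum fun t => ?_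
  have hf : Monotone fun C : Finset V => (if C = Finset.univ then (1:ℝ≥0∞) else 0) := by
    intro C C' hCC
    by_cases hC : C = Finset.univ
    · have hC' : C' = Finset.univ := Finset.univ_subset_iff.mp (hC ▸ hCC)
      simp [hC, hC']
    · simp [hC]
  have key : ∀ v : V → V → ℝ≥0,
      ∑ C : Finset V, state v S t C * (if C = Finset.univ then (1:ℝ≥0∞) else 0)
        = state v S t Finset.univ := by
    intro v
    simp only [mul_ite, mul_one, mul_zero]
    rw [Finset.sum_ite_eq']
    simp
  have hdom := state_dom w w' S hout hin t hf
  rw [key, key] at hdom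
  have hfs : ∀ v : V → V → ℝ≥0,
      ∑ C ∈ Finset.univ.filter (fun C : Finset V => C ≠ Finset.univ), state v S t C
        = 1 - state v S t Finset.univ := by
    intro v
    have h1 := Finset.sum_filter_add_sum_filter_not Finset.univ
      (fun C : Finset V => C ≠ Finset.univ) (state v S t)
    rw [state_sum_one v S t] at h1
    have h2 : ∑ C ∈ Finset.univ.filter
        (fun C : Finset V => ¬ C ≠ Finset.univ), state v S t C
          = state v S t Finset.univ := by
      simp [Finset.filter_eq']
    rw [h2] at h1
    exact ENNReal.eq_sub_of_add_eq (by
      refine lt_of_le_of_lt ?_ ENNReal.one_lt_top |>.ne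
      calc state v S t Finset.univ ≤ ∑ C : Finset V, state v S t C :=
            Finset.single_le_sum (fun _ _ => zero_le) (Finset.mem_univ _)
        _ = 1 := state_sum_one v S t) h1
  rw [hfs w, hfs w']
  exact tsub_le_tsub_left hdom 1

end RZFAux

/-- Increasing the weights of some directed edges whose tails
lie in the initial blue set `S` (all other edge weights unchanged) cannot
increase the expected propagation time of weighted RZF. -/
theorem rzf_ept_weight_increase_out_of_S {V : Type*} [Fintype V] [DecidableEq V]
    (w w' : V → V → ℝ≥0) (S : Finset V)
    (hout : ∀ u x : V, u ∉ S → w' u x = w u x)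
    (hin : ∀ u x : V, u ∈ S → w u x ≤ w' u x) :
    RZF.ept w' S ≤ RZF.ept w S :=
  RZFAux.ept_mono w w' S hout hin
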